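/- In the setting of the one-step expected loss bound for IDP-SGD (objective ℒ₁ differentiable with L₂-Lipschitz gradient; fixed iterate θ with u = ∇ℒ₁(θ); mean gradient v of the second owner; batches B₁, B₂ of stochastic gradients g_d with a.s. deviations ≤ ξ₁ and ≤ ξ₂ from u and v respectively; clipping factors φ_d = h_{C₁}(‖g_d‖) or h_{C₂}(‖g_d‖); zero-mean square-integrable noise Z with E[⟪G, Z⟫] = 0 where G = Σ φ_d g_d; update θ'(η) = θ − (η/b)(G + Z) with b > 0, and ℒ₁∘θ'(η) integrable for each η), suppose additionally that Σ_{d∈B₁} E[φ_d]·(‖u‖² − ξ₁‖u‖) + Σ_{d∈B₂} E[φ_d]·(⟪u, v⟫ − ξ₂‖u‖) > 0. Then there exists η₀ > 0 such that for every learning rate η with 0 < η < η₀, the expected loss strictly decreases: E[ℒ₁(θ'(η))] < ℒ₁(θ). -/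

import Mathlib

open MeasureTheory
set_option maxHeartbeats 1000000

/-- The clipping factor: `h_C(x) = 1` if `x ≤ C` and `h_C(x) = C / x` otherwise. -/
noncomputable def clipFactor (C x : ℝ) : ℝ := if x ≤ C then 1 else C / x

lemma clipFactor_nonneg {C : ℝ} (hC : 0 < C) (x : ℝ) : 0 ≤ clipFactor C x := by
  unfold clipFactor
  split
  · norm_num
  · exact le_of_lt (div_pos hC (lt_trans hC (lt_of_not_ge ‹_›)))

lemma clipFactor_le_one {C : ℝ} (hC : 0 < C) (x : ℝ) : clipFactor C x ≤ 1 := by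
  unfold clipFactor
  split
  · exact le_refl 1
  · have hx : C < x := lt_of_not_ge ‹_›
    rw [div_le_one (lt_trans hC hx)]
    exact le_of_lt hx

lemma clipFactor_mul_le {C : ℝ} (hC : 0 < C) {x : ℝ} (hx : 0 ≤ x) :
    clipFactor C x * x ≤ C := by
  unfold clipFactor
  split
  · simpa using ‹x ≤ C›
  · have hx' : C < x := lt_of_not_ge ‹_›
    rw [div_mul_cancel₀]
    exact ne_of_gt (lt_trans hC hx')

lemma measurable_clipFactor (C : ℝ) : Measurable (clipFactor C) := by
  unfold clipFactor
  exact Measurable.ite (measurableSet_le measurable_id measurable_const)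
    measurable_const (measurable_const.div measurable_id)

lemma descent_lemma {E : Type*} [NormedAddCommGroup E] [InnerProductSpace ℝ E] [CompleteSpace E]
    (f : E → ℝ) (L : ℝ)
    (hdiff : ∀ x, DifferentiableAt ℝ f x)
    (hlip : ∀ x y, ‖gradient f x - gradient f y‖ ≤ L * ‖x - y‖)
    (θ w : E) :
    f (θ + w) ≤ f θ + (inner ℝ (gradient f θ) w : ℝ) + L / 2 * ‖w‖ ^ 2 := by
  have hline : ∀ t : ℝ, HasDerivAt (fun s : ℝ => θ + s • w) w t := by
    intro t
    simpa using ((hasDerivAt_id t).smul_const w).const_add θ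
  have hF : ∀ t : ℝ, HasDerivAt (fun s : ℝ => f (θ + s • w))
      (inner ℝ (gradient f (θ + t • w)) w : ℝ) t := by
    intro t
    have h1 : HasFDerivAt f (InnerProductSpace.toDual ℝ E (gradient f (θ + t • w))) (θ + t • w) :=
      (hasGradientAt_iff_hasFDerivAt.mp (hdiff _).hasGradientAt)
    simpa [InnerProductSpace.toDual_apply_apply, Function.comp_def] using (h1.comp_hasDerivAt t (hline t))
  set p : ℝ := (inner ℝ (gradient f θ) w : ℝ)
  have hg : ∀ t : ℝ, HasDerivAt
      (fun t : ℝ => f θ + t * p + L * ‖w‖ ^ 2 / 2 * t ^ 2 - f (θ + t • w))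
      (p + L * ‖w‖ ^ 2 * t - inner ℝ (gradient f (θ + t • w)) w) t := by
    intro t
    have h2 : HasDerivAt (fun t : ℝ => f θ + t * p + L * ‖w‖ ^ 2 / 2 * t ^ 2)
        (p + L * ‖w‖ ^ 2 * t) t := by
      have := (((hasDerivAt_id t).mul_const p).const_add (f θ)).add
        (((hasDerivAt_pow 2 t).const_mul (L * ‖w‖ ^ 2 / 2)))
      refine this.congr_deriv ?_
      norm_num
      ring
    exact h2.sub (hF t)
  have key : (0:ℝ) ≤ f θ + 1 * p + L * ‖w‖ ^ 2 / 2 * 1 ^ 2 - f (θ + (1:ℝ) • w) := by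
    have mono : MonotoneOn (fun t : ℝ => f θ + t * p + L * ‖w‖ ^ 2 / 2 * t ^ 2 - f (θ + t • w))
        (Set.Icc 0 1) := by
      apply monotoneOn_of_deriv_nonneg (convex_Icc 0 1)
      · have hc : Continuous fun t : ℝ => f (θ + t • w) :=
          Differentiable.continuous (fun t => (hF t).differentiableAt)
        exact Continuous.continuousOn (by continuity)
      · intro t ht
        exact (hg t).differentiableAt.differentiableWithinAt
      · intro t ht
        rw [(hg t).deriv]
        rw [interior_Icc] at ht
        have hdev : (inner ℝ (gradient f (θ + t • w) - gradient f θ) w : ℝ)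
            ≤ L * ‖w‖ ^ 2 * t := by
          calc (inner ℝ (gradient f (θ + t • w) - gradient f θ) w : ℝ)
              ≤ ‖gradient f (θ + t • w) - gradient f θ‖ * ‖w‖ := real_inner_le_norm _ _
            _ ≤ L * ‖θ + t • w - θ‖ * ‖w‖ :=
                mul_le_mul_of_nonneg_right (hlip _ _) (norm_nonneg _)
            _ = L * ‖w‖ ^ 2 * t := by
                rw [add_sub_cancel_left, norm_smul, Real.norm_eq_abs, abs_of_pos ht.1]
                ring
        rw [inner_sub_left] at hdev
        linarith
    have h0 : (fun t : ℝ => f θ + t * p + L * ‖w‖ ^ 2 / 2 * t ^ 2 - f (θ + t • w)) 0 = 0 := by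
      simp
    have := mono (Set.mem_Icc.mpr ⟨le_refl 0, zero_le_one⟩)
      (Set.mem_Icc.mpr ⟨zero_le_one, le_refl 1⟩) zero_le_one
    rw [h0] at this
    exact this
  simp only [one_smul, one_mul, one_pow, mul_one] at key
  linarith

theorem stmt9 (r : ℕ) (L1 : EuclideanSpace ℝ (Fin r) → ℝ) (L2 : ℝ) (hL2 : 0 ≤ L2)
    (hdiff : ∀ x, DifferentiableAt ℝ L1 x)
    (hlip : ∀ x y, ‖gradient L1 x - gradient L1 y‖ ≤ L2 * ‖x - y‖)
    (θ : EuclideanSpace ℝ (Fin r)) (u : EuclideanSpace ℝ (Fin r))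
    (hu : u = gradient L1 θ) (v : EuclideanSpace ℝ (Fin r))
    (ξ₁ ξ₂ : ℝ) (hξ₁ : 0 ≤ ξ₁) (hξ₂ : 0 ≤ ξ₂)
    (C₁ C₂ : ℝ) (hC₁ : 0 < C₁) (hC₂ : 0 < C₂)
    (b : ℝ) (hb : 0 < b)
    {Ω : Type*} [MeasurableSpace Ω] (P : Measure Ω) [IsProbabilityMeasure P]
    {ι : Type*} [DecidableEq ι] (B₁ B₂ : Finset ι) (hdisj : Disjoint B₁ B₂)
    (g : ι → Ω → EuclideanSpace ℝ (Fin r))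
    (hgmeas : ∀ d ∈ B₁ ∪ B₂, StronglyMeasurable (g d))
    (hdev₁ : ∀ d ∈ B₁, ∀ᵐ ω ∂P, ‖g d ω - u‖ ≤ ξ₁)
    (hdev₂ : ∀ d ∈ B₂, ∀ᵐ ω ∂P, ‖g d ω - v‖ ≤ ξ₂)
    (φ : ι → Ω → ℝ)
    (hφ₁ : ∀ d ∈ B₁, ∀ ω, φ d ω = clipFactor C₁ ‖g d ω‖)
    (hφ₂ : ∀ d ∈ B₂, ∀ ω, φ d ω = clipFactor C₂ ‖g d ω‖)
    (G : Ω → EuclideanSpace ℝ (Fin r))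
    (hG : ∀ ω, G ω = ∑ d ∈ B₁ ∪ B₂, φ d ω • g d ω)
    (Z : Ω → EuclideanSpace ℝ (Fin r)) (hZmeas : StronglyMeasurable Z)
    (hZmean : ∫ ω, Z ω ∂P = 0)
    (hZsq : Integrable (fun ω => ‖Z ω‖ ^ 2) P)
    (horth : ∫ ω, (inner ℝ (G ω) (Z ω) : ℝ) ∂P = 0)
    (θ' : ℝ → Ω → EuclideanSpace ℝ (Fin r))
    (hθ' : ∀ η : ℝ, ∀ ω, θ' η ω = θ - (η / b) • (G ω + Z ω))
    (hintL : ∀ η : ℝ, Integrable (fun ω => L1 (θ' η ω)) P)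
    (hpos : 0 < (∑ d ∈ B₁, ∫ ω, φ d ω ∂P) * (‖u‖ ^ 2 - ξ₁ * ‖u‖)
        + (∑ d ∈ B₂, ∫ ω, φ d ω ∂P) * ((inner ℝ u v : ℝ) - ξ₂ * ‖u‖)) :
    ∃ η₀ > (0 : ℝ), ∀ η : ℝ, 0 < η → η < η₀ →
      (∫ ω, L1 (θ' η ω) ∂P) < L1 θ := by
  classical
  -- basic facts about the clipping weights
  have hφ_nonneg : ∀ d ∈ B₁ ∪ B₂, ∀ ω, 0 ≤ φ d ω := by
    intro d hd ω
    rcases Finset.mem_union.mp hd with h | h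
    · rw [hφ₁ d h]; exact clipFactor_nonneg hC₁ _
    · rw [hφ₂ d h]; exact clipFactor_nonneg hC₂ _
  have hφ_le_one : ∀ d ∈ B₁ ∪ B₂, ∀ ω, φ d ω ≤ 1 := by
    intro d hd ω
    rcases Finset.mem_union.mp hd with h | h
    · rw [hφ₁ d h]; exact clipFactor_le_one hC₁ _
    · rw [hφ₂ d h]; exact clipFactor_le_one hC₂ _
  have hφg₁ : ∀ d ∈ B₁, ∀ ω, φ d ω * ‖g d ω‖ ≤ C₁ := by
    intro d hd ω
    rw [hφ₁ d hd]
    exact clipFactor_mul_le hC₁ (norm_nonneg _)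
  have hφg₂ : ∀ d ∈ B₂, ∀ ω, φ d ω * ‖g d ω‖ ≤ C₂ := by
    intro d hd ω
    rw [hφ₂ d hd]
    exact clipFactor_mul_le hC₂ (norm_nonneg _)
  have hφg : ∀ d ∈ B₁ ∪ B₂, ∀ ω, φ d ω * ‖g d ω‖ ≤ max C₁ C₂ := by
    intro d hd ω
    rcases Finset.mem_union.mp hd with h | h
    · exact (hφg₁ d h ω).trans (le_max_left _ _)
    · exact (hφg₂ d h ω).trans (le_max_right _ _)
  have hφmeas : ∀ d ∈ B₁ ∪ B₂, StronglyMeasurable (φ d) := by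
    intro d hd
    rcases Finset.mem_union.mp hd with h | h
    · have : φ d = fun ω => clipFactor C₁ ‖g d ω‖ := funext (hφ₁ d h)
      rw [this]
      exact ((measurable_clipFactor C₁).comp (hgmeas d hd).measurable.norm).stronglyMeasurable
    · have : φ d = fun ω => clipFactor C₂ ‖g d ω‖ := funext (hφ₂ d h)
      rw [this]
      exact ((measurable_clipFactor C₂).comp (hgmeas d hd).measurable.norm).stronglyMeasurable
  have hφint : ∀ d ∈ B₁ ∪ B₂, Integrable (φ d) P := by
    intro d hd
    refine (integrable_const (1:ℝ)).mono' (hφmeas d hd).aestronglyMeasurable ?_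
    filter_upwards with ω
    rw [Real.norm_eq_abs, abs_of_nonneg (hφ_nonneg d hd ω)]
    exact hφ_le_one d hd ω
  -- G is bounded and measurable
  set K : ℝ := (B₁.card : ℝ) * C₁ + (B₂.card : ℝ) * C₂ with hKdef
  have hGbound : ∀ ω, ‖G ω‖ ≤ K := by
    intro ω
    rw [hG ω]
    calc ‖∑ d ∈ B₁ ∪ B₂, φ d ω • g d ω‖
        ≤ ∑ d ∈ B₁ ∪ B₂, ‖φ d ω • g d ω‖ := norm_sum_le _ _
      _ = ∑ d ∈ B₁, ‖φ d ω • g d ω‖ + ∑ d ∈ B₂, ‖φ d ω • g d ω‖ :=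
          Finset.sum_union hdisj
      _ ≤ ∑ _d ∈ B₁, C₁ + ∑ _d ∈ B₂, C₂ := by
          refine add_le_add (Finset.sum_le_sum ?_) (Finset.sum_le_sum ?_) <;>
            intro d hd <;>
            rw [norm_smul, Real.norm_eq_abs,
              abs_of_nonneg (hφ_nonneg d (by simp [Finset.mem_union, hd]) ω)]
          · exact hφg₁ d hd ω
          · exact hφg₂ d hd ω
      _ = K := by simp [hKdef, mul_comm]
  have hK0 : 0 ≤ K :=
    add_nonneg (mul_nonneg (Nat.cast_nonneg _) hC₁.le) (mul_nonneg (Nat.cast_nonneg _) hC₂.le)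
  have hGmeas : StronglyMeasurable G := by
    have hGeq : G = fun ω => ∑ d ∈ B₁ ∪ B₂, φ d ω • g d ω := funext hG
    rw [hGeq]
    exact Finset.stronglyMeasurable_fun_sum _ (fun d hd => (hφmeas d hd).smul (hgmeas d hd))
  -- Z is integrable
  have hZint : Integrable Z P := by
    have hgi : Integrable (fun ω => (1:ℝ) + ‖Z ω‖ ^ 2) P := (integrable_const 1).add hZsq
    refine hgi.mono' hZmeas.aestronglyMeasurable ?_
    filter_upwards with ω
    have h := norm_nonneg (Z ω)
    nlinarith [sq_nonneg (‖Z ω‖ - 1)]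
  -- key integrands
  set Y : Ω → ℝ := fun ω => inner ℝ u (G ω + Z ω) with hYdef
  set W : Ω → ℝ := fun ω => ‖G ω + Z ω‖ ^ 2 with hWdef
  have hGin_int : Integrable (fun ω => (inner ℝ u (G ω) : ℝ)) P := by
    refine (integrable_const (‖u‖ * K)).mono'
      (stronglyMeasurable_const.inner hGmeas).aestronglyMeasurable ?_
    filter_upwards with ω
    rw [Real.norm_eq_abs (inner ℝ u (G ω) : ℝ)]
    exact (abs_real_inner_le_norm _ _).trans
      (mul_le_mul_of_nonneg_left (hGbound ω) (norm_nonneg u))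
  have hZin_int : Integrable (fun ω => (inner ℝ u (Z ω) : ℝ)) P := hZint.const_inner u
  have hYint : Integrable Y P := by
    have : Y = fun ω => (inner ℝ u (G ω) : ℝ) + (inner ℝ u (Z ω) : ℝ) := by
      funext ω; rw [hYdef]; exact inner_add_right u (G ω) (Z ω)
    rw [this]
    exact hGin_int.add hZin_int
  have hWint : Integrable W P := by
    have hgi : Integrable (fun ω => 2 * K ^ 2 + 2 * ‖Z ω‖ ^ 2) P :=
      (integrable_const _).add (hZsq.const_mul 2)
    refine hgi.mono' ?_ ?_
    · have h1 : StronglyMeasurable fun ω => ‖G ω + Z ω‖ := (hGmeas.add hZmeas).norm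
      exact (h1.mul h1).aestronglyMeasurable.congr
        (Filter.Eventually.of_forall fun ω => (sq ‖G ω + Z ω‖).symm)
    · filter_upwards with ω
      simp only [hWdef]
      rw [Real.norm_eq_abs, abs_of_nonneg (sq_nonneg _)]
      have h2 : ‖G ω + Z ω‖ ≤ K + ‖Z ω‖ :=
        (norm_add_le _ _).trans (add_le_add_left (hGbound ω) _)
      have h3 : ‖G ω + Z ω‖ ^ 2 ≤ (K + ‖Z ω‖) ^ 2 := by
        rw [sq, sq]
        exact mul_le_mul h2 h2 (norm_nonneg _) (add_nonneg hK0 (norm_nonneg _))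
      nlinarith [sq_nonneg (K - ‖Z ω‖)]
  -- per-datum integrands
  have huGint : ∀ d ∈ B₁ ∪ B₂, Integrable (fun ω => φ d ω * (inner ℝ u (g d ω) : ℝ)) P := by
    intro d hd
    refine (integrable_const (max C₁ C₂ * ‖u‖)).mono'
      ((hφmeas d hd).mul (stronglyMeasurable_const.inner (hgmeas d hd))).aestronglyMeasurable ?_
    filter_upwards with ω
    rw [Real.norm_eq_abs, abs_mul, abs_of_nonneg (hφ_nonneg d hd ω)]
    calc φ d ω * |(inner ℝ u (g d ω) : ℝ)|
        ≤ φ d ω * (‖u‖ * ‖g d ω‖) :=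
          mul_le_mul_of_nonneg_left (abs_real_inner_le_norm _ _) (hφ_nonneg d hd ω)
      _ = (φ d ω * ‖g d ω‖) * ‖u‖ := by ring
      _ ≤ max C₁ C₂ * ‖u‖ :=
          mul_le_mul_of_nonneg_right (hφg d hd ω) (norm_nonneg u)
  have hsumG : ∫ ω, (inner ℝ u (G ω) : ℝ) ∂P
      = ∑ d ∈ B₁ ∪ B₂, ∫ ω, φ d ω * (inner ℝ u (g d ω) : ℝ) ∂P := by
    have heq : (fun ω => (inner ℝ u (G ω) : ℝ))
        = fun ω => ∑ d ∈ B₁ ∪ B₂, φ d ω * (inner ℝ u (g d ω) : ℝ) := by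
      funext ω
      rw [hG ω, inner_sum]
      exact Finset.sum_congr rfl fun d _ => real_inner_smul_right u (g d ω) (φ d ω)
    rw [heq]
    exact integral_finset_sum _ huGint
  -- lower bounds on each term
  have hlow₁ : ∀ d ∈ B₁, (∫ ω, φ d ω ∂P) * (‖u‖ ^ 2 - ξ₁ * ‖u‖)
      ≤ ∫ ω, φ d ω * (inner ℝ u (g d ω) : ℝ) ∂P := by
    intro d hd
    have hdm : d ∈ B₁ ∪ B₂ := Finset.mem_union_left _ hd
    have h1 : ∀ᵐ ω ∂P, φ d ω * (‖u‖ ^ 2 - ξ₁ * ‖u‖) ≤ φ d ω * (inner ℝ u (g d ω) : ℝ) := by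
      filter_upwards [hdev₁ d hd] with ω hω
      refine mul_le_mul_of_nonneg_left ?_ (hφ_nonneg d hdm ω)
      have h2 : (inner ℝ u (g d ω) : ℝ) = ‖u‖ ^ 2 + (inner ℝ u (g d ω - u) : ℝ) := by
        rw [inner_sub_right, real_inner_self_eq_norm_sq]; ring
      have h3 : |(inner ℝ u (g d ω - u) : ℝ)| ≤ ‖u‖ * ξ₁ :=
        (abs_real_inner_le_norm _ _).trans
          (mul_le_mul_of_nonneg_left hω (norm_nonneg u))
      have h4 := neg_abs_le ((inner ℝ u (g d ω - u) : ℝ))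
      rw [h2]
      nlinarith
    have := integral_mono_ae ((hφint d hdm).mul_const _) (huGint d hdm) h1
    rwa [integral_mul_const] at this
  have hlow₂ : ∀ d ∈ B₂, (∫ ω, φ d ω ∂P) * ((inner ℝ u v : ℝ) - ξ₂ * ‖u‖)
      ≤ ∫ ω, φ d ω * (inner ℝ u (g d ω) : ℝ) ∂P := by
    intro d hd
    have hdm : d ∈ B₁ ∪ B₂ := Finset.mem_union_right _ hd
    have h1 : ∀ᵐ ω ∂P, φ d ω * ((inner ℝ u v : ℝ) - ξ₂ * ‖u‖)
        ≤ φ d ω * (inner ℝ u (g d ω) : ℝ) := by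
      filter_upwards [hdev₂ d hd] with ω hω
      refine mul_le_mul_of_nonneg_left ?_ (hφ_nonneg d hdm ω)
      have h2 : (inner ℝ u (g d ω) : ℝ) = (inner ℝ u v : ℝ) + (inner ℝ u (g d ω - v) : ℝ) := by
        rw [inner_sub_right]; ring
      have h3 : |(inner ℝ u (g d ω - v) : ℝ)| ≤ ‖u‖ * ξ₂ :=
        (abs_real_inner_le_norm _ _).trans
          (mul_le_mul_of_nonneg_left hω (norm_nonneg u))
      have h4 := neg_abs_le ((inner ℝ u (g d ω - v) : ℝ))
      rw [h2]
      nlinarith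
    have := integral_mono_ae ((hφint d hdm).mul_const _) (huGint d hdm) h1
    rwa [integral_mul_const] at this
  -- abbreviations
  set D : ℝ := (∑ d ∈ B₁, ∫ ω, φ d ω ∂P) * (‖u‖ ^ 2 - ξ₁ * ‖u‖)
      + (∑ d ∈ B₂, ∫ ω, φ d ω ∂P) * ((inner ℝ u v : ℝ) - ξ₂ * ‖u‖) with hDdef
  have hD : 0 < D := hpos
  have hYge : D ≤ ∫ ω, Y ω ∂P := by
    have hYsplit : ∫ ω, Y ω ∂P
        = ∫ ω, (inner ℝ u (G ω) : ℝ) ∂P + ∫ ω, (inner ℝ u (Z ω) : ℝ) ∂P := by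
      rw [← integral_add hGin_int hZin_int]
      refine integral_congr_ae (Filter.Eventually.of_forall fun ω => ?_)
      simp only [hYdef]
      exact inner_add_right u (G ω) (Z ω)
    have hZzero : ∫ ω, (inner ℝ u (Z ω) : ℝ) ∂P = 0 := by
      rw [integral_inner hZint u, hZmean, inner_zero_right]
    rw [hYsplit, hZzero, add_zero, hsumG, Finset.sum_union hdisj, hDdef,
      Finset.sum_mul, Finset.sum_mul]
    exact add_le_add (Finset.sum_le_sum hlow₁) (Finset.sum_le_sum hlow₂)
  -- pointwise descent bound
  have hpt : ∀ η : ℝ, 0 ≤ η → ∀ ω,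
      L1 (θ' η ω) ≤ L1 θ - (η / b) * Y ω + L2 / 2 * (η / b) ^ 2 * W ω := by
    intro η hη ω
    have hθeq : θ' η ω = θ + (-(η / b)) • (G ω + Z ω) := by
      rw [hθ' η ω, neg_smul, ← sub_eq_add_neg]
    have hw := descent_lemma L1 L2 hdiff hlip θ ((-(η / b)) • (G ω + Z ω))
    rw [← hθeq] at hw
    refine hw.trans (le_of_eq ?_)
    rw [← hu, real_inner_smul_right, norm_smul, Real.norm_eq_abs, abs_neg,
      abs_of_nonneg (div_nonneg hη hb.le), mul_pow]
    simp only [hYdef, hWdef]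
    ring
  -- integrate the bound
  set M : ℝ := ∫ ω, W ω ∂P with hMdef
  have hM0 : 0 ≤ M := integral_nonneg fun ω => sq_nonneg _
  have hIb : ∀ η : ℝ, 0 ≤ η → ∫ ω, L1 (θ' η ω) ∂P
      ≤ L1 θ - (η / b) * (∫ ω, Y ω ∂P) + L2 / 2 * (η / b) ^ 2 * M := by
    intro η hη
    have hint3 : Integrable (fun ω => (η / b) * Y ω) P := hYint.const_mul _
    have hint1 : Integrable (fun ω => L1 θ - (η / b) * Y ω) P :=
      (integrable_const _).sub hint3
    have hint2 : Integrable (fun ω => L2 / 2 * (η / b) ^ 2 * W ω) P := hWint.const_mul _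
    have hrhs : Integrable
        (fun ω => L1 θ - (η / b) * Y ω + L2 / 2 * (η / b) ^ 2 * W ω) P := hint1.add hint2
    have h1 := integral_mono (hintL η) hrhs (hpt η hη)
    rwa [integral_add hint1 hint2, integral_sub (integrable_const _) hint3,
      integral_const_mul, integral_const_mul, integral_const, probReal_univ,
      one_smul] at h1
  -- choose the threshold
  set A : ℝ := L2 * M / (2 * b ^ 2) with hAdef
  have hA0 : 0 ≤ A := div_nonneg (mul_nonneg hL2 hM0) (by positivity)
  refine ⟨(D / b) / (A + 1), div_pos (div_pos hD hb) (by linarith), ?_⟩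
  intro η hη hηlt
  have h1 := hIb η hη.le
  have h2 : L2 / 2 * (η / b) ^ 2 * M = η ^ 2 * A := by
    rw [hAdef]; field_simp
  have h3 : (η / b) * D ≤ (η / b) * ∫ ω, Y ω ∂P :=
    mul_le_mul_of_nonneg_left hYge (by positivity)
  have h4 : η ^ 2 * A < (η / b) * D := by
    have h5 : η * (A + 1) < D / b :=
      (lt_div_iff₀ (by linarith : (0:ℝ) < A + 1)).mp hηlt
    have h6 : η * A < D / b := by nlinarith
    calc η ^ 2 * A = η * (η * A) := by ring
      _ < η * (D / b) := by
          exact mul_lt_mul_of_pos_left h6 hη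
      _ = (η / b) * D := by ring
  linarith
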